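/- arXiv:1503.02736 — 2 statements merged into one kernel-verified Lean document; each statement's English description precedes it below -/
import Mathlib

section
/- Let ρ, c, k, ℓ, γ, D∞, h₀ be positive real parameters, let α = k/(ρc), and let 0 < ε < 1. Define F(x) = exp(-x²) / (k/(h₀√(πα)) + erf(x)) and G(x) = x + (γ(1-ε)√π/(2D∞)) · (1/F(x)) for x > 0. Then the equation (D∞c/(ℓ√π)) F(x) = G(x) has a (unique) solution x = ξ > 0 if and only if h₀ > (1/D∞)√(γ(1-ε)ρℓk/2); moreover, when this inequality holds the positive solution ξ is unique. -/
open Real Filter Set Topology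

/-- The error function `erf x = (2/√π) ∫₀ˣ exp(-t²) dt`. -/
noncomputable def erf (x : ℝ) : ℝ := (2 / Real.sqrt π) * ∫ t in (0:ℝ)..x, Real.exp (-t ^ 2)

lemma erf_zero' : erf 0 = 0 := by simp [erf]

lemma contExpSq : Continuous fun t : ℝ => Real.exp (-t ^ 2) := by continuity

lemma erf_strictMono : StrictMono erf := by
  intro x y hxy
  unfold erf
  have hadd : (∫ t in (0:ℝ)..x, Real.exp (-t ^ 2)) + ∫ t in x..y, Real.exp (-t ^ 2)
      = ∫ t in (0:ℝ)..y, Real.exp (-t ^ 2) :=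
    intervalIntegral.integral_add_adjacent_intervals
      (contExpSq.intervalIntegrable _ _) (contExpSq.intervalIntegrable _ _)
  have hpos : 0 < ∫ t in x..y, Real.exp (-t ^ 2) :=
    intervalIntegral.intervalIntegral_pos_of_pos (contExpSq.intervalIntegrable _ _)
      (fun t => Real.exp_pos _) hxy
  have h2 : 0 < 2 / Real.sqrt π := by positivity
  have : (∫ t in (0:ℝ)..x, Real.exp (-t ^ 2)) < ∫ t in (0:ℝ)..y, Real.exp (-t ^ 2) := by
    linarith
  exact mul_lt_mul_of_pos_left this h2

lemma erf_continuous : Continuous erf :=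
  continuous_const.mul
    (intervalIntegral.continuous_primitive (fun a b => contExpSq.intervalIntegrable a b) 0)

lemma erf_nonneg' {x : ℝ} (hx : 0 ≤ x) : 0 ≤ erf x := by
  rcases eq_or_lt_of_le hx with h | h
  · simp [← h, erf_zero']
  · have := erf_strictMono h
    rw [erf_zero'] at this
    exact this.le

set_option maxHeartbeats 1000000 in
/-- The equation `(D∞ c/(ℓ√π)) F(x) = G(x)` determining the solid–mushy interface
coefficient `ξ` for the convective boundary condition has a positive solution iff
`h₀ > (1/D∞)√(γ(1-ε)ρℓk/2)`, and in that case the positive solution is unique. -/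
theorem stmt_2 (ρ c k ℓ γ Dinf h₀ ε α : ℝ)
    (hρ : 0 < ρ) (hc : 0 < c) (hk : 0 < k) (hℓ : 0 < ℓ) (hγ : 0 < γ)
    (hD : 0 < Dinf) (hh : 0 < h₀) (hα : α = k / (ρ * c)) (hε0 : 0 < ε) (hε1 : ε < 1)
    (F G : ℝ → ℝ)
    (hF : ∀ x, F x = Real.exp (-x ^ 2) / (k / (h₀ * Real.sqrt (π * α)) + erf x))
    (hG : ∀ x, G x = x + (γ * (1 - ε) * Real.sqrt π / (2 * Dinf)) * (1 / F x)) :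
    ((∃ ξ > (0:ℝ), (Dinf * c / (ℓ * Real.sqrt π)) * F ξ = G ξ) ↔
      h₀ > (1 / Dinf) * Real.sqrt (γ * (1 - ε) * ρ * ℓ * k / 2)) ∧
    (h₀ > (1 / Dinf) * Real.sqrt (γ * (1 - ε) * ρ * ℓ * k / 2) →
      ∃! ξ : ℝ, ξ > 0 ∧ (Dinf * c / (ℓ * Real.sqrt π)) * F ξ = G ξ) := by
  have hπ : (0:ℝ) < π := Real.pi_pos
  have hsπ : 0 < Real.sqrt π := Real.sqrt_pos.2 hπ
  have h1ε : 0 < 1 - ε := by linarith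
  have hαpos : 0 < α := by rw [hα]; positivity
  have hπα : 0 < π * α := by positivity
  have hsπα : 0 < Real.sqrt (π * α) := Real.sqrt_pos.2 hπα
  set A : ℝ := k / (h₀ * Real.sqrt (π * α)) with hAdef
  set B : ℝ := γ * (1 - ε) * Real.sqrt π / (2 * Dinf) with hBdef
  set C : ℝ := Dinf * c / (ℓ * Real.sqrt π) with hCdef
  have hA : 0 < A := by rw [hAdef]; positivity
  have hB : 0 < B := by rw [hBdef]; positivity
  have hC : 0 < C := by rw [hCdef]; positivity
  have hden : ∀ x : ℝ, 0 ≤ x → 0 < A + erf x := fun x hx =>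
    lt_of_lt_of_le hA (by linarith [erf_nonneg' hx])
  set H : ℝ → ℝ := fun x =>
    C * (Real.exp (-x ^ 2) / (A + erf x)) - x - B * ((A + erf x) / Real.exp (-x ^ 2))
    with hHdef
  -- equation ↔ H = 0
  have heqv : ∀ x : ℝ, ((Dinf * c / (ℓ * Real.sqrt π)) * F x = G x ↔ H x = 0) := by
    intro x
    have h1 : (1:ℝ) / F x = (A + erf x) / Real.exp (-x ^ 2) := by
      rw [hF x, one_div_div]
    rw [hG x, h1, hF x]
    constructor
    · intro h; simp only [hHdef]; linarith
    · intro h; simp only [hHdef] at h; linarith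
  -- strict antitonicity of H on [0, ∞)
  have hHanti : ∀ x y : ℝ, 0 ≤ x → x < y → H y < H x := by
    intro x y hx hxy
    have hx2 : x ^ 2 < y ^ 2 := by nlinarith
    have he : Real.exp (-y ^ 2) < Real.exp (-x ^ 2) := Real.exp_lt_exp.2 (by linarith)
    have herf : erf x < erf y := erf_strictMono hxy
    have hdx := hden x hx
    have hdy := hden y (le_of_lt (lt_of_le_of_lt hx hxy))
    have h1 : Real.exp (-y ^ 2) / (A + erf y) < Real.exp (-x ^ 2) / (A + erf x) :=
      div_lt_div₀ he (by linarith) (Real.exp_pos _).le hdx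
    have h2 : (A + erf x) / Real.exp (-x ^ 2) < (A + erf y) / Real.exp (-y ^ 2) :=
      div_lt_div₀ (by linarith) he.le hdy.le (Real.exp_pos _)
    have h3 := mul_lt_mul_of_pos_left h1 hC
    have h4 := mul_lt_mul_of_pos_left h2 hB
    simp only [hHdef]
    linarith
  -- continuity of H on [0, ∞)
  have hHcont : ContinuousOn H (Ici 0) := by
    apply ContinuousOn.sub
    apply ContinuousOn.sub
    · exact continuousOn_const.mul (contExpSq.continuousOn.div
        (continuous_const.add erf_continuous).continuousOn (fun x hx => (hden x hx).ne'))
    · exact continuousOn_id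
    · exact continuousOn_const.mul ((continuous_const.add erf_continuous).continuousOn.div
        contExpSq.continuousOn (fun x _ => (Real.exp_pos _).ne'))
  -- value at 0
  have hH0 : H 0 = C / A - B * A := by
    simp only [hHdef]
    norm_num [erf_zero', div_eq_mul_inv]
  -- key algebraic identity
  set S : ℝ := γ * (1 - ε) * ρ * ℓ * k / 2 with hSdef
  have hA2 : A ^ 2 = k ^ 2 / (h₀ ^ 2 * (Real.sqrt π ^ 2 * α)) := by
    rw [hAdef, div_pow, mul_pow, Real.sq_sqrt hπα.le, Real.sq_sqrt hπ.le]
  have hkey : (C - B * A ^ 2) * (Real.sqrt π * ℓ * 2 * Dinf * h₀ ^ 2)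
      = ((Dinf * h₀) ^ 2 - S) * (2 * c) := by
    rw [hCdef, hBdef, hA2, hα, hSdef]
    have hs : Real.sqrt π ≠ 0 := hsπ.ne'
    field_simp
  have hm : 0 < Real.sqrt π * ℓ * 2 * Dinf * h₀ ^ 2 := by positivity
  -- the parameter inequality ↔ 0 < H 0
  have hPiff : ((1 / Dinf) * Real.sqrt S < h₀) ↔ 0 < H 0 := by
    rw [one_div, inv_mul_lt_iff₀ hD, Real.sqrt_lt' (by positivity), hH0]
    have hCA : C / A - B * A = (C - B * A ^ 2) / A := by field_simp
    rw [hCA]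
    constructor
    · intro h
      have h2 : 0 < C - B * A ^ 2 := by nlinarith [hkey, mul_pos (sub_pos.2 h) hc]
      exact div_pos h2 hA
    · intro h
      have h2 : 0 < C - B * A ^ 2 := by
        have := mul_pos h hA
        rwa [div_mul_cancel₀ _ hA.ne'] at this
      nlinarith [hkey, mul_pos h2 hm]
  -- existence from 0 < H 0
  have hexists : 0 < H 0 → ∃ ξ > (0:ℝ), H ξ = 0 := by
    intro hH0pos
    set M : ℝ := C / A + 1 with hMdef
    have hM : 0 < M := by positivity
    have hHM : H M < 0 := by
      have h1 : Real.exp (-M ^ 2) ≤ 1 := by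
        rw [show (1:ℝ) = Real.exp 0 by simp]
        exact Real.exp_le_exp.2 (by nlinarith [sq_nonneg M])
      have e1 : Real.exp (-M ^ 2) / (A + erf M) ≤ 1 / A :=
        div_le_div₀ zero_le_one h1 hA (by linarith [erf_nonneg' hM.le])
      have e2 : 0 < B * ((A + erf M) / Real.exp (-M ^ 2)) :=
        mul_pos hB (div_pos (hden M hM.le) (Real.exp_pos _))
      have e3 : C * (Real.exp (-M ^ 2) / (A + erf M)) ≤ C * (1 / A) :=
        mul_le_mul_of_nonneg_left e1 hC.le
      have e4 : C * (1 / A) = C / A := mul_one_div _ _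
      simp only [hHdef]
      linarith
    have hmem : (0:ℝ) ∈ Ioo (H M) (H 0) := ⟨hHM, hH0pos⟩
    obtain ⟨ξ, hξmem, hξ⟩ := intermediate_value_Ioo' hM.le
      (hHcont.mono (fun x hx => hx.1)) hmem
    exact ⟨ξ, hξmem.1, hξ⟩
  -- only if
  have honlyif : (∃ ξ > (0:ℝ), H ξ = 0) → 0 < H 0 := by
    rintro ⟨ξ, hξ, h0⟩
    have := hHanti 0 ξ le_rfl hξ
    linarith
  -- uniqueness
  have huniq : ∀ ξ₁ ξ₂ : ℝ, 0 < ξ₁ → H ξ₁ = 0 → 0 < ξ₂ → H ξ₂ = 0 → ξ₁ = ξ₂ := by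
    intro ξ₁ ξ₂ h₁ e₁ h₂ e₂
    rcases lt_trichotomy ξ₁ ξ₂ with h | h | h
    · have := hHanti ξ₁ ξ₂ h₁.le h; linarith
    · exact h
    · have := hHanti ξ₂ ξ₁ h₂.le h; linarith
  refine ⟨⟨?_, ?_⟩, ?_⟩
  · rintro ⟨ξ, hξ, heq⟩
    exact hPiff.2 (honlyif ⟨ξ, hξ, (heqv ξ).1 heq⟩)
  · intro hP
    obtain ⟨ξ, hξ, h0⟩ := hexists (hPiff.1 hP)
    exact ⟨ξ, hξ, (heqv ξ).2 h0⟩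
  · intro hP
    obtain ⟨ξ, hξ, h0⟩ := hexists (hPiff.1 hP)
    refine ⟨ξ, ⟨hξ, (heqv ξ).2 h0⟩, ?_⟩
    rintro y ⟨hy, hyeq⟩
    exact huniq y ξ hy ((heqv y).1 hyeq) hξ h0
end

section
/- Let α, k, h₀, D∞, γ be positive reals and ξ > 0. Define T(x,t) = -(h₀D∞√(πα)/k) · erf(ξ)/(1 + (h₀√(πα)/k)·erf(ξ)) · [1 - erf(x/(2√(αt)))/erf(ξ)], s(t) = 2ξ√(αt), μ = ξ + (γk/(2D∞h₀√α)) · exp(ξ²) · [1 + (h₀√(πα)/k)·erf(ξ)], and r(t) = 2μ√(αt). Then for all t > 0, T_x(s(t), t) · (r(t) - s(t)) = γ. -/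
open Real Filter Set Topology

lemma erf_hasDerivAt (x : ℝ) :
    HasDerivAt erf ((2 / Real.sqrt π) * Real.exp (-x ^ 2)) x := by
  have hc : Continuous fun t : ℝ => Real.exp (-t ^ 2) := by continuity
  have h : HasDerivAt (fun u => ∫ t in (0:ℝ)..u, Real.exp (-t ^ 2))
      (Real.exp (-x ^ 2)) x := by
    exact intervalIntegral.integral_hasDerivAt_right
      (hc.intervalIntegrable 0 x)
      (hc.stronglyMeasurableAtFilter _ _)
      hc.continuousAt
  exact h.const_mul _

lemma erf_pos {x : ℝ} (hx : 0 < x) : 0 < erf x := by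
  have h1 : 0 < Real.sqrt π := Real.sqrt_pos.mpr Real.pi_pos
  have h2 : 0 < ∫ t in (0:ℝ)..x, Real.exp (-t ^ 2) := by
    apply intervalIntegral.intervalIntegral_pos_of_pos_on
    · exact (Continuous.intervalIntegrable (by continuity) 0 x)
    · intro t _; positivity
    · exact hx
  unfold erf; positivity

/-- For the explicit solution with convective boundary condition, the mushy-zone width
condition `T_x(s(t),t) · (r(t) - s(t)) = γ` holds for all `t > 0`. -/
theorem stmt_4 (α k h₀ Dinf γ ξ μ : ℝ) (hα : 0 < α) (hk : 0 < k) (hh : 0 < h₀)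
    (hD : 0 < Dinf) (hγ : 0 < γ) (hξ : 0 < ξ)
    (T : ℝ → ℝ → ℝ) (s r : ℝ → ℝ)
    (hT : ∀ x t, T x t =
      -(h₀ * Dinf * Real.sqrt (π * α) / k) *
        (erf ξ / (1 + (h₀ * Real.sqrt (π * α) / k) * erf ξ)) *
        (1 - erf (x / (2 * Real.sqrt (α * t))) / erf ξ))
    (hs : ∀ t, s t = 2 * ξ * Real.sqrt (α * t))
    (hμ : μ = ξ + (γ * k / (2 * Dinf * h₀ * Real.sqrt α)) * Real.exp (ξ ^ 2) *
      (1 + (h₀ * Real.sqrt (π * α) / k) * erf ξ))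
    (hr : ∀ t, r t = 2 * μ * Real.sqrt (α * t)) :
    ∀ t > (0:ℝ), deriv (fun y => T y t) (s t) * (r t - s t) = γ := by
  intro t ht
  have hαt : 0 < α * t := mul_pos hα ht
  have hqs : Real.sqrt (α * t) = Real.sqrt α * Real.sqrt t := Real.sqrt_mul hα.le t
  have hq : 0 < Real.sqrt (α * t) := Real.sqrt_pos.mpr hαt
  set q := Real.sqrt (α * t) with hqdef
  set C : ℝ := -(h₀ * Dinf * Real.sqrt (π * α) / k) *
      (erf ξ / (1 + (h₀ * Real.sqrt (π * α) / k) * erf ξ)) with hC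
  have hTfun : (fun y => T y t) = fun y => C * (1 - erf (y / (2 * q)) / erf ξ) := by
    funext y; rw [hT]
  have hsξ : s t / (2 * q) = ξ := by
    rw [hs, hqs, Real.sqrt_mul hα.le t]; field_simp
  have hinner : HasDerivAt (fun y : ℝ => y / (2 * q)) (1 / (2 * q)) (s t) := by
    simpa using (hasDerivAt_id (s t)).div_const (2 * q)
  have herf : HasDerivAt (fun y : ℝ => erf (y / (2 * q)))
      ((2 / Real.sqrt π) * Real.exp (-ξ ^ 2) * (1 / (2 * q))) (s t) := by
    have := (erf_hasDerivAt (s t / (2 * q))).comp (s t) hinner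
    rwa [hsξ] at this
  have hD' : HasDerivAt (fun y => T y t)
      (C * (-((2 / Real.sqrt π) * Real.exp (-ξ ^ 2) * (1 / (2 * q)) / erf ξ))) (s t) := by
    rw [hTfun]
    exact ((herf.div_const (erf ξ)).const_sub 1).const_mul C
  rw [hD'.deriv, hr, hs, hμ]
  have hE : 0 < erf ξ := erf_pos hξ
  have hπ : 0 < Real.sqrt π := Real.sqrt_pos.mpr Real.pi_pos
  have hsa : 0 < Real.sqrt α := Real.sqrt_pos.mpr hα
  have hB : 0 < 1 + (h₀ * Real.sqrt (π * α) / k) * erf ξ := by positivity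
  have hsplit : Real.sqrt (π * α) = Real.sqrt π * Real.sqrt α :=
    Real.sqrt_mul Real.pi_pos.le α
  have hexp : Real.exp (-ξ ^ 2) * Real.exp (ξ ^ 2) = 1 := by
    rw [← Real.exp_add]; simp
  have hexpne : Real.exp (ξ ^ 2) ≠ 0 := (Real.exp_pos _).ne'
  rw [hC, hsplit, Real.exp_neg, hqs, Real.sqrt_mul hα.le t]
  field_simp
  ring
end
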